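/- arXiv:0907.4858 — 4 statements merged into one kernel-verified Lean document; each statement's English description precedes it below -/
import Mathlib

section
/- Suppose ω(r,s) = ζ₁(r) + ζ₂(s) where ζ₁, ζ₂ are twice differentiable, ζ₁''(r)(r²+1) + c₁ exp(-ζ₁(r)/c) + 2(r ζ₁'(r) - c) = 0 for all r, and ζ₂''(s) + K c₁ exp(ζ₂(s)/c) = 0 for all s, with c ≠ 0. Then ω satisfies ω_ss = K exp(ω/c) ((1+r²) ω_rr + 2r ω_r - 2c). -/
theorem stmt_8 (c c₁ K : ℝ) (hc : c ≠ 0) (ζ₁ ζ₂ : ℝ → ℝ)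
    (h₁ : Differentiable ℝ ζ₁) (h₁' : Differentiable ℝ (deriv ζ₁))
    (h₂ : Differentiable ℝ ζ₂) (h₂' : Differentiable ℝ (deriv ζ₂))
    (hode₁ : ∀ r, deriv (deriv ζ₁) r * (r ^ 2 + 1)
        + c₁ * Real.exp (-(ζ₁ r) / c) + 2 * (r * deriv ζ₁ r - c) = 0)
    (hode₂ : ∀ s, deriv (deriv ζ₂) s + K * c₁ * Real.exp (ζ₂ s / c) = 0) :
    let ω : ℝ → ℝ → ℝ := fun r s => ζ₁ r + ζ₂ s
    ∀ r s : ℝ,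
      deriv (deriv (fun s' => ω r s')) s =
        K * Real.exp (ω r s / c) *
          ((1 + r ^ 2) * deriv (deriv (fun r' => ω r' s)) r
            + 2 * r * deriv (fun r' => ω r' s) r - 2 * c) := by
  intro ω r s
  have hs1 : (deriv (fun s' => ω r s')) = fun x => deriv ζ₂ x := by
    funext x; simp [ω, deriv_const_add]
  have hr1 : (deriv (fun r' => ω r' s)) = fun x => deriv ζ₁ x := by
    funext x; simp [ω, deriv_add_const]
  rw [hs1, hr1]
  have e2 : deriv (fun x => deriv ζ₂ x) s = deriv (deriv ζ₂) s := rfl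
  have e1 : deriv (fun x => deriv ζ₁ x) r = deriv (deriv ζ₁) r := rfl
  rw [e2, e1]
  have h1 := hode₁ r
  have h2 := hode₂ s
  have key : (1 + r ^ 2) * deriv (deriv ζ₁) r + 2 * r * deriv ζ₁ r - 2 * c
      = -(c₁ * Real.exp (-(ζ₁ r) / c)) := by linarith
  rw [key]
  have hexp : Real.exp (ω r s / c) * Real.exp (-(ζ₁ r) / c)
      = Real.exp (ζ₂ s / c) := by
    rw [← Real.exp_add]
    congr 1
    simp only [ω]
    field_simp
    ring
  have : deriv (deriv ζ₂) s = -(K * c₁ * Real.exp (ζ₂ s / c)) := by linarith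
  rw [this, ← hexp]
  ring
end

section
/- Let c ≠ 0, K ≠ 0. If ω : ℝ² → ℝ is twice differentiable and satisfies ω_ss(r,s) = K exp(ω(r,s)/c)((1+r²)ω_rr(r,s) + 2r ω_r(r,s) - 2c), then the function u(x,y,t) = ω(y/x, t) + 2c ln x satisfies the wave equation u_tt = K exp(u/c)(u_xx + u_yy) for all x > 0. -/
theorem stmt_9 (c K : ℝ) (hc : c ≠ 0) (hK : K ≠ 0) (ω : ℝ → ℝ → ℝ)
    (hω : ContDiff ℝ 2 (fun p : ℝ × ℝ => ω p.1 p.2))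
    (hred : ∀ r s : ℝ,
      deriv (deriv (fun s' => ω r s')) s =
        K * Real.exp (ω r s / c) *
          ((1 + r ^ 2) * deriv (deriv (fun r' => ω r' s)) r
            + 2 * r * deriv (fun r' => ω r' s) r - 2 * c)) :
    let u : ℝ → ℝ → ℝ → ℝ := fun x y t => ω (y / x) t + 2 * c * Real.log x
    ∀ x y t : ℝ, 0 < x →
      deriv (deriv (fun t' => u x y t')) t =
        K * Real.exp (u x y t / c) *
          (deriv (deriv (fun x' => u x' y t)) x
            + deriv (deriv (fun y' => u x y' t)) y) := by
  intro u x y t hx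
  set f : ℝ × ℝ → ℝ := fun p => ω p.1 p.2 with hfdef
  have hf1 : ∀ p : ℝ × ℝ, DifferentiableAt ℝ f p :=
    fun p => (hω.differentiable (by norm_num)).differentiableAt
  set F₁ : ℝ × ℝ → ℝ := fun p => fderiv ℝ f p (1, 0) with hF₁def
  set F₂ : ℝ × ℝ → ℝ := fun p => fderiv ℝ f p (0, 1) with hF₂def
  have hF₁c : ContDiff ℝ 1 F₁ := (hω.fderiv_right (by norm_num)).clm_apply contDiff_const
  have hF₂c : ContDiff ℝ 1 F₂ := (hω.fderiv_right (by norm_num)).clm_apply contDiff_const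
  have hF₁d : ∀ p : ℝ × ℝ, DifferentiableAt ℝ F₁ p :=
    fun p => (hF₁c.differentiable (by norm_num)).differentiableAt
  have hF₂d : ∀ p : ℝ × ℝ, DifferentiableAt ℝ F₂ p :=
    fun p => (hF₂c.differentiable (by norm_num)).differentiableAt
  have key1 : ∀ (g : ℝ × ℝ → ℝ), (∀ p, DifferentiableAt ℝ g p) → ∀ r s : ℝ,
      HasDerivAt (fun r' => g (r', s)) (fderiv ℝ g (r, s) (1, 0)) r := by
    intro g hg r s
    exact (hg (r, s)).hasFDerivAt.comp_hasDerivAt r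
      ((hasDerivAt_id r).prodMk (hasDerivAt_const r s))
  have key2 : ∀ (g : ℝ × ℝ → ℝ), (∀ p, DifferentiableAt ℝ g p) → ∀ r s : ℝ,
      HasDerivAt (fun s' => g (r, s')) (fderiv ℝ g (r, s) (0, 1)) s := by
    intro g hg r s
    exact (hg (r, s)).hasFDerivAt.comp_hasDerivAt s
      ((hasDerivAt_const s r).prodMk (hasDerivAt_id s))
  -- partial derivatives of ω in terms of F₁, F₂
  have ωr : ∀ r s : ℝ, deriv (fun r' => ω r' s) r = F₁ (r, s) :=
    fun r s => (key1 f hf1 r s).deriv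
  have ωrr : ∀ r s : ℝ, deriv (deriv (fun r' => ω r' s)) r = fderiv ℝ F₁ (r, s) (1, 0) := by
    intro r s
    have h : deriv (fun r' => ω r' s) = fun r' => F₁ (r', s) :=
      funext fun r' => (key1 f hf1 r' s).deriv
    rw [h]
    exact (key1 F₁ hF₁d r s).deriv
  have ωss : ∀ r s : ℝ, deriv (deriv (fun s' => ω r s')) s = fderiv ℝ F₂ (r, s) (0, 1) := by
    intro r s
    have h : deriv (fun s' => ω r s') = fun s' => F₂ (r, s') :=
      funext fun s' => (key2 f hf1 r s').deriv
    rw [h]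
    exact (key2 F₂ hF₂d r s).deriv
  -- u_tt
  have ht1 : deriv (fun t' => u x y t') = fun t' => F₂ (y / x, t') := by
    funext t'
    exact ((key2 f hf1 (y / x) t').add_const (2 * c * Real.log x)).deriv
  have hutt : deriv (deriv (fun t' => u x y t')) t = fderiv ℝ F₂ (y / x, t) (0, 1) := by
    rw [ht1]
    exact (key2 F₂ hF₂d (y / x) t).deriv
  -- u_yy
  have hdiv : ∀ y' : ℝ, HasDerivAt (fun y'' : ℝ => y'' / x) x⁻¹ y' := by
    intro y'
    simpa [one_div] using (hasDerivAt_id y').div_const x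
  have hy1 : deriv (fun y' => u x y' t) = fun y' => F₁ (y' / x, t) * x⁻¹ := by
    funext y'
    exact (((key1 f hf1 (y' / x) t).comp y' (hdiv y')).add_const (2 * c * Real.log x)).deriv
  have huyy : deriv (deriv (fun y' => u x y' t)) y
      = fderiv ℝ F₁ (y / x, t) (1, 0) * x⁻¹ * x⁻¹ := by
    rw [hy1]
    exact (((key1 F₁ hF₁d (y / x) t).comp y (hdiv y)).mul_const x⁻¹).deriv
  -- u_x on x' > 0
  have hinv : ∀ x' : ℝ, x' ≠ 0 → HasDerivAt (fun x'' : ℝ => y / x'') (y * -(x' ^ 2)⁻¹) x' := by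
    intro x' hx'
    simpa [div_eq_mul_inv] using (hasDerivAt_inv hx').const_mul y
  have hx1 : ∀ x' : ℝ, 0 < x' →
      HasDerivAt (fun x'' => u x'' y t)
        (F₁ (y / x', t) * (y * -(x' ^ 2)⁻¹) + 2 * c * x'⁻¹) x' := by
    intro x' hx'
    exact ((key1 f hf1 (y / x') t).comp x' (hinv x' hx'.ne')).add
      ((Real.hasDerivAt_log hx'.ne').const_mul (2 * c))
  have hev : deriv (fun x' => u x' y t) =ᶠ[nhds x]
      fun x' => F₁ (y / x', t) * (y * -(x' ^ 2)⁻¹) + 2 * c * x'⁻¹ := by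
    filter_upwards [Ioi_mem_nhds hx] with x' hx'
    exact (hx1 x' hx').deriv
  have hq : HasDerivAt (fun x' : ℝ => y * -(x' ^ 2)⁻¹) (y * (2 * x / (x ^ 2) ^ 2)) x := by
    have h := (((hasDerivAt_pow 2 x).inv (pow_ne_zero 2 hx.ne')).neg).const_mul y
    refine h.congr_deriv ?_
    push_cast
    ring
  have huxx : deriv (deriv (fun x' => u x' y t)) x
      = (fderiv ℝ F₁ (y / x, t) (1, 0) * (y * -(x ^ 2)⁻¹)) * (y * -(x ^ 2)⁻¹)
        + F₁ (y / x, t) * (y * (2 * x / (x ^ 2) ^ 2))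
        + 2 * c * -(x ^ 2)⁻¹ := by
    rw [hev.deriv_eq]
    have hA : HasDerivAt (fun x' => F₁ (y / x', t))
        (fderiv ℝ F₁ (y / x, t) (1, 0) * (y * -(x ^ 2)⁻¹)) x :=
      (key1 F₁ hF₁d (y / x) t).comp x (hinv x hx.ne')
    exact ((hA.mul hq).add ((hasDerivAt_inv hx.ne').const_mul (2 * c))).deriv
  -- assemble
  have hred' : fderiv ℝ F₂ (y / x, t) (0, 1) =
      K * Real.exp (ω (y / x) t / c) *
        ((1 + (y / x) ^ 2) * fderiv ℝ F₁ (y / x, t) (1, 0)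
          + 2 * (y / x) * F₁ (y / x, t) - 2 * c) := by
    rw [← ωss, ← ωrr, ← ωr]
    exact hred (y / x) t
  have hexp : Real.exp (u x y t / c) = Real.exp (ω (y / x) t / c) * x ^ 2 := by
    show Real.exp ((ω (y / x) t + 2 * c * Real.log x) / c) = _
    rw [add_div, Real.exp_add]
    congr 1
    rw [show 2 * c * Real.log x / c = Real.log (x ^ 2) by
      rw [Real.log_pow]; push_cast; field_simp]
    exact Real.exp_log (by positivity)
  rw [hutt, huxx, huyy, hred', hexp]
  have hx0 : x ≠ 0 := hx.ne'
  field_simp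
  ring
end

section
/- Let c, L be constants with L ≠ 0, and suppose ς₁, ς₂ : ℝ → ℝ are twice differentiable with ς₁''(p) - c ς₁(p)² = 0 for all p and (q²+1) ς₂''(q) - 2q ς₂'(q) + 2ς₂(q) - c/L = 0 for all q. Then ϑ(p,q) = ς₁(p)·ς₂(q) satisfies ϑ_pp = L ϑ ((q²+1) ϑ_qq - 2q ϑ_q + 2ϑ). -/
theorem stmt_11 (c L : ℝ) (hL : L ≠ 0) (ς₁ ς₂ : ℝ → ℝ)
    (h₁ : Differentiable ℝ ς₁) (h₁' : Differentiable ℝ (deriv ς₁))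
    (h₂ : Differentiable ℝ ς₂) (h₂' : Differentiable ℝ (deriv ς₂))
    (hode₁ : ∀ p, deriv (deriv ς₁) p - c * (ς₁ p) ^ 2 = 0)
    (hode₂ : ∀ q, (q ^ 2 + 1) * deriv (deriv ς₂) q - 2 * q * deriv ς₂ q
        + 2 * ς₂ q - c / L = 0) :
    let ϑ : ℝ → ℝ → ℝ := fun p q => ς₁ p * ς₂ q
    ∀ p q : ℝ,
      deriv (deriv (fun p' => ϑ p' q)) p =
        L * ϑ p q * ((q ^ 2 + 1) * deriv (deriv (fun q' => ϑ p q')) q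
          - 2 * q * deriv (fun q' => ϑ p q') q + 2 * ϑ p q) := by
  intro ϑ p q
  have e1 : deriv (fun p' => ϑ p' q) = fun p' => deriv ς₁ p' * ς₂ q := by
    funext x; exact deriv_mul_const (h₁.differentiableAt) _
  have e2 : deriv (fun q' => ϑ p q') = fun q' => ς₁ p * deriv ς₂ q' := by
    funext x; exact deriv_const_mul _ (h₂.differentiableAt)
  have e1' : deriv (deriv (fun p' => ϑ p' q)) p = deriv (deriv ς₁) p * ς₂ q := by
    rw [e1]; exact deriv_mul_const (h₁'.differentiableAt) _
  have e2' : deriv (deriv (fun q' => ϑ p q')) q = ς₁ p * deriv (deriv ς₂) q := by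
    rw [e2]; exact deriv_const_mul _ (h₂'.differentiableAt)
  rw [e1', e2', e2]
  have h1 := hode₁ p
  have h2 := hode₂ q
  have h2' : (q ^ 2 + 1) * deriv (deriv ς₂) q - 2 * q * deriv ς₂ q + 2 * ς₂ q = c / L := by
    linarith
  have : deriv (deriv ς₁) p = c * ς₁ p ^ 2 := by linarith
  show deriv (deriv ς₁) p * ς₂ q =
      L * (ς₁ p * ς₂ q) * ((q ^ 2 + 1) * (ς₁ p * deriv (deriv ς₂) q)
        - 2 * q * (ς₁ p * deriv ς₂ q) + 2 * (ς₁ p * ς₂ q))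
  rw [this]
  have : (q ^ 2 + 1) * (ς₁ p * deriv (deriv ς₂) q) - 2 * q * (ς₁ p * deriv ς₂ q)
      + 2 * (ς₁ p * ς₂ q) = ς₁ p * (c / L) := by rw [← h2']; ring
  rw [this]
  field_simp
end

section
/- For c ≠ 0 and any ε ∈ ℝ, if u(x,y,t) solves u_tt = K e^(u/c)(u_xx + u_yy), then ũ(x,y,t) = u(x, y, e^(-ε) t) - 2cε also solves the same equation (time-scaling symmetry generated by v₄ = t∂_t - 2c∂_u). -/
lemma deriv_comp_const_mul' (f : ℝ → ℝ) (hf : Differentiable ℝ f) (a : ℝ) :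
    deriv (fun t => f (a * t)) = fun t => a * deriv f (a * t) := by
  funext t
  have h1 : HasDerivAt (fun t : ℝ => a * t) a t := by
    simpa using (hasDerivAt_id t).const_mul a
  exact ((hf (a * t)).hasDerivAt.comp t h1).deriv.trans (mul_comm _ _)

theorem stmt_15 (K c ε : ℝ) (hc : c ≠ 0) (u : ℝ → ℝ → ℝ → ℝ)
    (hu : ContDiff ℝ 2 (fun p : ℝ × ℝ × ℝ => u p.1 p.2.1 p.2.2))
    (hsol : ∀ x y t : ℝ,
      deriv (deriv (fun t' => u x y t')) t =
        K * Real.exp (u x y t / c) *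
          (deriv (deriv (fun x' => u x' y t)) x
            + deriv (deriv (fun y' => u x y' t)) y)) :
    let v : ℝ → ℝ → ℝ → ℝ :=
      fun x y t => u x y (Real.exp (-ε) * t) - 2 * c * ε
    ∀ x y t : ℝ,
      deriv (deriv (fun t' => v x y t')) t =
        K * Real.exp (v x y t / c) *
          (deriv (deriv (fun x' => v x' y t)) x
            + deriv (deriv (fun y' => v x y' t)) y) := by
  intro v x y t
  set a := Real.exp (-ε) with ha
  have hft : ContDiff ℝ 2 (fun s => u x y s) :=
    hu.comp (contDiff_const.prodMk (contDiff_const.prodMk contDiff_id))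
  have hd1 : Differentiable ℝ (fun s => u x y s) :=
    hft.differentiable two_ne_zero
  have hd2 : Differentiable ℝ (deriv fun s => u x y s) := by
    have hft' : ContDiff ℝ ((1 : WithTop ℕ∞) + 1) (fun s => u x y s) := by
      norm_num
      exact hft
    exact (contDiff_succ_iff_deriv.mp hft').2.2.differentiable one_ne_zero
  -- time derivatives
  have e1 : (fun t' => v x y t') = fun t' => (fun s => u x y s) (a * t') - 2 * c * ε := rfl
  have e2 : deriv (fun t' => v x y t') = fun t' => a * deriv (fun s => u x y s) (a * t') := by
    rw [e1]
    funext s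
    rw [deriv_sub_const]
    rw [deriv_comp_const_mul' _ hd1]
  have e3 : deriv (deriv (fun t' => v x y t')) t
      = a * (a * deriv (deriv (fun s => u x y s)) (a * t)) := by
    rw [e2]
    rw [deriv_const_mul _ (by
      have := (hd2.comp ((differentiable_id.const_mul a))) t
      exact this)]
    rw [deriv_comp_const_mul' _ hd2]
  -- spatial derivatives
  have ex : (fun x' => v x' y t) = fun x' => u x' y (a * t) - 2 * c * ε := rfl
  have ex2 : deriv (fun x' => v x' y t) = deriv (fun x' => u x' y (a * t)) := by
    rw [ex]; funext s; rw [deriv_sub_const]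
  have ey2 : deriv (fun y' => v x y' t) = deriv (fun y' => u x y' (a * t)) := by
    funext s; exact deriv_sub_const _
  rw [e3, ex2, ey2, hsol x y (a * t)]
  have hv : v x y t = u x y (a * t) - 2 * c * ε := rfl
  have h2 : 2 * c * ε / c = 2 * ε := by field_simp
  have hexp : Real.exp (v x y t / c) = Real.exp (u x y (a * t) / c) * Real.exp (-(2 * ε)) := by
    rw [hv, sub_div, h2, sub_eq_add_neg, Real.exp_add]
  have haa : a * a = Real.exp (-(2 * ε)) := by
    rw [ha, ← Real.exp_add]; ring_nf
  rw [hexp, ← haa]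
  ring
end
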